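/- Let (A, ∨, 1) be a join-semilattice with top element 1 and natural order ≤, and → a binary operation on A. Then (A, →, 1) is a wBCK*-algebra (x ≤ y iff x → y = 1, and x ≤ y → z implies y ≤ x → z) if and only if → satisfies: (i) x ≤ (x → y) → y; (ii) 1 → x = x; (iii) x → (x ∨ y) = 1; (iv) (x ∨ y) → z ≤ y → z. -/

import Mathlib

/-- On a join-semilattice with top, `(A, →, ⊤)` is a wBCK*-algebra iff
`→` satisfies (i) x ≤ (x → y) → y, (ii) ⊤ → x = x, (iii) x → (x ∨ y) = ⊤,
(iv) (x ∨ y) → z ≤ y → z. -/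
theorem stmt18 {A : Type*} [SemilatticeSup A] [OrderTop A] (op : A → A → A) :
    ((∀ x y : A, x ≤ y ↔ op x y = ⊤) ∧ (∀ x y z : A, x ≤ op y z → y ≤ op x z)) ↔
    ((∀ x y : A, x ≤ op (op x y) y) ∧ (∀ x : A, op ⊤ x = x) ∧
     (∀ x y : A, op x (x ⊔ y) = ⊤) ∧ (∀ x y z : A, op (x ⊔ y) z ≤ op y z)) := by
  constructor
  · rintro ⟨h1, h2⟩
    have hi : ∀ x y : A, x ≤ op (op x y) y := fun x y => h2 _ _ _ le_rfl
    refine ⟨hi, ?_, ?_, ?_⟩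
    · intro x
      have hle : op ⊤ x ≤ x := by
        apply (h1 _ _).mpr
        exact le_antisymm le_top (hi ⊤ x)
      have hge : x ≤ op ⊤ x := h2 _ _ _ (((h1 x x).mp le_rfl).ge)
      exact le_antisymm hle hge
    · intro x y; exact (h1 _ _).mp le_sup_left
    · intro x y z
      exact h2 _ _ _ (le_sup_right.trans (hi (x ⊔ y) z))
  · rintro ⟨hi, hii, hiii, hiv⟩
    constructor
    · intro x y
      constructor
      · intro h; have := hiii x y; rwa [sup_eq_right.mpr h] at this
      · intro h; have := hi x y; rwa [h, hii] at this
    · intro x y z h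
      have h1 : op (op y z) z ≤ op x z := by
        have := hiv (op y z) x z
        rwa [sup_comm, sup_eq_right.mpr h] at this
      exact (hi y z).trans h1
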